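/- The equation (p/α₁(p))·α₁′(p) = −1/r, with α₁(p) = (1 − √(1−(1−p)²))/(1−p), is equivalent on (0,1) to the polynomial equation (1/r²)(1−p)²(2−p) = p, and its unique solution satisfies p_opt(r) = 2/r² − 10/r⁴ + o(r⁻⁴) as r → ∞. -/

import Mathlib

open Filter Asymptotics

lemma stmt19_key_bound (r p : ℝ) (hr : 3 ≤ r) (hp0 : 0 < p) (hp1 : p < 1)
    (heq : r ^ 2 * p = (1 - p) ^ 2 * (2 - p)) :
    0 ≤ r ^ 6 * p - 2 * r ^ 4 + 10 * r ^ 2 ∧ r ^ 6 * p - 2 * r ^ 4 + 10 * r ^ 2 ≤ 66 := by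
  have hr0 : (0:ℝ) < r := by linarith
  have hA : p * (r ^ 2 + 5 - 4 * p + p ^ 2) = 2 := by linear_combination heq
  have hpr2 : p * r ^ 2 ≤ 2 := by nlinarith
  have hApos : 0 < r ^ 2 + 5 - 4 * p + p ^ 2 := by nlinarith
  constructor
  · nlinarith [mul_pos hp0 hApos, sq_nonneg r, mul_nonneg (mul_nonneg hp0.le hp0.le) (sq_nonneg r),
      mul_nonneg (sub_nonneg.mpr hpr2) (sq_nonneg r)]
  · have e1 : r ^ 6 * p * ((r ^ 2 + 5 - 4 * p + p ^ 2) * r ^ 2) = 2 * r ^ 8 := by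
      linear_combination r ^ 8 * hA
    have e2 : (r ^ 2 + 5 - 4 * p + p ^ 2) * r ^ 2 ≥ r ^ 4 + 5 * r ^ 2 - 8 := by
      nlinarith [sq_nonneg (p * r)]
    have e3 : (2 * r ^ 4 - 10 * r ^ 2 + 66) * (r ^ 4 + 5 * r ^ 2 - 8) ≥ 2 * r ^ 8 := by
      nlinarith
    have e4 : (0:ℝ) < 2 * r ^ 4 - 10 * r ^ 2 + 66 := by nlinarith
    have hX : 0 < (r ^ 2 + 5 - 4 * p + p ^ 2) * r ^ 2 := by positivity
    have e5 : r ^ 6 * p * ((r ^ 2 + 5 - 4 * p + p ^ 2) * r ^ 2) ≤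
        (2 * r ^ 4 - 10 * r ^ 2 + 66) * ((r ^ 2 + 5 - 4 * p + p ^ 2) * r ^ 2) := by
      calc r ^ 6 * p * ((r ^ 2 + 5 - 4 * p + p ^ 2) * r ^ 2) = 2 * r ^ 8 := e1
        _ ≤ (2 * r ^ 4 - 10 * r ^ 2 + 66) * (r ^ 4 + 5 * r ^ 2 - 8) := e3
        _ ≤ (2 * r ^ 4 - 10 * r ^ 2 + 66) * ((r ^ 2 + 5 - 4 * p + p ^ 2) * r ^ 2) :=
            mul_le_mul_of_nonneg_left e2 e4.le
    have := le_of_mul_le_mul_right e5 hX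
    linarith

lemma stmt19_helper (ε r p : ℝ) (hr : 3 ≤ r)
    (hlow : 0 ≤ r ^ 6 * p - 2 * r ^ 4 + 10 * r ^ 2)
    (hhigh : r ^ 6 * p - 2 * r ^ 4 + 10 * r ^ 2 ≤ 66)
    (hεr : 66 / r ^ 2 ≤ ε) :
    ‖p - (2 / r ^ 2 - 10 / r ^ 4)‖ ≤ ε * ‖1 / r ^ 4‖ := by
  have hr0 : (0:ℝ) < r := by linarith
  have hval : p - (2 / r ^ 2 - 10 / r ^ 4) = (r ^ 6 * p - 2 * r ^ 4 + 10 * r ^ 2) / r ^ 6 := by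
    field_simp
    ring
  rw [Real.norm_eq_abs, Real.norm_eq_abs, hval,
    abs_of_nonneg (div_nonneg hlow (by positivity)),
    abs_of_nonneg (by positivity : (0:ℝ) ≤ 1 / r ^ 4)]
  rw [div_le_iff₀ (by positivity)]
  have h66 : (66:ℝ) ≤ ε * r ^ 2 := by
    rw [div_le_iff₀ (by positivity)] at hεr
    linarith
  have : ε * (1 / r ^ 4) * r ^ 6 = ε * r ^ 2 := by
    field_simp
  rw [this]
  linarith

/-- With `α₁(p) = (1 - √(1-(1-p)²))/(1-p)`, the equation
`(p/α₁(p)) α₁′(p) = -1/r` is equivalent on `(0,1)` to the polynomial equation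
`(1/r²)(1-p)²(2-p) = p`, and any solution `p_opt(r) ∈ (0,1)` of the latter
satisfies `p_opt(r) = 2/r² - 10/r⁴ + o(r⁻⁴)` as `r → ∞`. -/
theorem stmt19 (α₁ : ℝ → ℝ)
    (hα₁ : ∀ p : ℝ, α₁ p = (1 - Real.sqrt (1 - (1 - p) ^ 2)) / (1 - p))
    (popt : ℝ → ℝ)
    (hpopt : ∀ r : ℝ, 1 ≤ r → popt r ∈ Set.Ioo (0 : ℝ) 1 ∧
      (1 / r ^ 2) * (1 - popt r) ^ 2 * (2 - popt r) = popt r) :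
    (∀ r : ℝ, 0 < r → ∀ p ∈ Set.Ioo (0 : ℝ) 1,
      (p / α₁ p * deriv α₁ p = -1 / r ↔
        (1 / r ^ 2) * (1 - p) ^ 2 * (2 - p) = p)) ∧
    (fun r : ℝ => popt r - (2 / r ^ 2 - 10 / r ^ 4))
      =o[atTop] fun r : ℝ => 1 / r ^ 4 := by
  have hα₁' : α₁ = fun x : ℝ => (1 - Real.sqrt (1 - (1 - x) ^ 2)) / (1 - x) := funext hα₁
  constructor
  · intro r hr p hp
    obtain ⟨hp0, hp1⟩ := hp
    set s := Real.sqrt (1 - (1 - p) ^ 2) with hs_def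
    have hq : (0:ℝ) < 1 - p := by linarith
    have hpos : 0 < 1 - (1 - p) ^ 2 := by nlinarith
    have hs0 : 0 < s := Real.sqrt_pos.mpr hpos
    have hs2 : s ^ 2 = 1 - (1 - p) ^ 2 := Real.sq_sqrt hpos.le
    have hs1 : s < 1 := by nlinarith [hs2, sq_nonneg (1 - p)]
    have h1s : (0:ℝ) < 1 - s := by linarith
    -- derivative
    have hD : HasDerivAt α₁
        (((-((1 / (2 * s)) * (2 * (1 - p)))) * (1 - p) - (1 - s) * (-1)) / (1 - p) ^ 2) p := by
      rw [hα₁']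
      have hg : HasDerivAt (fun x : ℝ => 1 - (1 - x) ^ 2) (2 * (1 - p)) p := by
        have h1 : HasDerivAt (fun x : ℝ => 1 - x) (-1) p := (hasDerivAt_id p).const_sub 1
        have h2 := (h1.pow 2).const_sub 1
        exact h2.congr_deriv (by norm_num)
      have hsder : HasDerivAt (fun x : ℝ => Real.sqrt (1 - (1 - x) ^ 2))
          ((1 / (2 * s)) * (2 * (1 - p))) p :=
        (Real.hasDerivAt_sqrt hpos.ne').comp p hg
      exact (hsder.const_sub 1).div ((hasDerivAt_id p).const_sub 1) hq.ne'
    have hderiv := hD.deriv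
    have hαp : α₁ p = (1 - s) / (1 - p) := hα₁ p
    rw [hderiv, hαp]
    have key : p / ((1 - s) / (1 - p)) *
        (((-((1 / (2 * s)) * (2 * (1 - p)))) * (1 - p) - (1 - s) * (-1)) / (1 - p) ^ 2)
        = -p / ((1 - p) * s) := by
      field_simp
      linear_combination (-1) * hs2
    rw [key]
    constructor
    · intro h
      have h2 : p * r = (1 - p) * s := by
        field_simp at h
        linarith
      have h3 : p ^ 2 * r ^ 2 = (1 - p) ^ 2 * (1 - (1 - p) ^ 2) := by
        rw [← hs2]; linear_combination (p * r + (1 - p) * s) * h2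
      have hexp : 1 - (1 - p) ^ 2 = p * (2 - p) := by ring
      rw [hexp] at h3
      field_simp
      nlinarith [h3]
    · intro h
      have h3 : ((1 - p) * s) ^ 2 = (p * r) ^ 2 := by
        have : (1 - p) ^ 2 * (2 - p) = r ^ 2 * p := by
          field_simp at h; linarith
        nlinarith [hs2]
      have h2 : (1 - p) * s = p * r := by
        have hfac : ((1 - p) * s - p * r) * ((1 - p) * s + p * r) = 0 := by
          linear_combination h3
        rcases mul_eq_zero.mp hfac with h' | h'
        · linarith
        · nlinarith [mul_pos hq hs0, mul_pos hp0 hr]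
      have hne1 : (1 - p) * s ≠ 0 := by positivity
      have hne2 : r ≠ 0 := hr.ne'
      rw [div_eq_div_iff hne1 hne2]
      linear_combination h2
  · rw [isLittleO_iff]
    intro ε hε
    have h1 : Tendsto (fun r : ℝ => 66 / r ^ 2) atTop (nhds 0) :=
      tendsto_const_nhds.div_atTop (tendsto_pow_atTop (by norm_num))
    have h2 : ∀ᶠ r : ℝ in atTop, 66 / r ^ 2 ≤ ε := h1.eventually (eventually_le_nhds hε)
    filter_upwards [eventually_ge_atTop (3:ℝ), h2] with r hr3 hεr
    have hr0 : (0:ℝ) < r := by linarith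
    obtain ⟨⟨hp0, hp1⟩, heq⟩ := hpopt r (by linarith)
    set p := popt r with hp_def
    have hr2 : (r:ℝ) ^ 2 ≠ 0 := by positivity
    have heq' : r ^ 2 * p = (1 - p) ^ 2 * (2 - p) := by
      have h : r ^ 2 * ((1 / r ^ 2) * (1 - p) ^ 2 * (2 - p)) = r ^ 2 * p := by rw [heq]
      rw [show r ^ 2 * ((1 / r ^ 2) * (1 - p) ^ 2 * (2 - p))
          = (r ^ 2 / r ^ 2) * ((1 - p) ^ 2 * (2 - p)) from by ring,
        div_self hr2, one_mul] at h
      linarith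
    obtain ⟨hlow, hhigh⟩ := stmt19_key_bound r p hr3 hp0 hp1 heq'
    exact stmt19_helper ε r p hr3 hlow hhigh hεr
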